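/- For all nonnegative integers n and r, the number of partitions of n whose smallest odd positive integer not appearing as a part equals 2r+1 is equal to the coefficient of q^n in q^{r^2}/∏_{m≥1, m≠2r+1}(1-q^m). -/

import Mathlib

open PowerSeries Finset

noncomputable def qPoch (n : ℕ) : PowerSeries ℚ :=
  ∏ k ∈ Finset.range n, (1 - (X : PowerSeries ℚ) ^ (k + 1))

noncomputable def gauss (L : ℕ) (s : ℤ) : PowerSeries ℚ :=
  if 0 ≤ s ∧ s ≤ (L : ℤ) then
    qPoch L * (qPoch s.toNat)⁻¹ * (qPoch (L - s.toNat))⁻¹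
  else 0
/-- The smallest positive odd integer that is not a part of `p`. -/
noncomputable def mexOdd {n : ℕ} (p : n.Partition) : ℕ :=
  sInf {m : ℕ | m % 2 = 1 ∧ m ∉ p.parts}

/-- The smallest positive even integer that is not a part of `p`. -/
noncomputable def mexEven {n : ℕ} (p : n.Partition) : ℕ :=
  sInf {m : ℕ | 0 < m ∧ m % 2 = 0 ∧ m ∉ p.parts}


namespace StmtAux
open scoped Classical
variable {α : Type*}
noncomputable def indicatorSeries (α : Type*) [Semiring α] (s : Set ℕ) : PowerSeries α :=
  PowerSeries.mk fun n => if n ∈ s then 1 else 0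

theorem coeff_indicator (s : Set ℕ) [Semiring α] (n : ℕ) :
    coeff (R := α) n (indicatorSeries _ s) = if n ∈ s then 1 else 0 :=
  coeff_mk _ _

theorem coeff_indicator_pos (s : Set ℕ) [Semiring α] (n : ℕ) (h : n ∈ s) :
    coeff (R := α) n (indicatorSeries _ s) = 1 := by rw [coeff_indicator, if_pos h]

theorem coeff_indicator_neg (s : Set ℕ) [Semiring α] (n : ℕ) (h : n ∉ s) :
    coeff (R := α) n (indicatorSeries _ s) = 0 := by rw [coeff_indicator, if_neg h]

theorem constantCoeff_indicator (s : Set ℕ) [Semiring α] :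
    constantCoeff (R := α) (indicatorSeries _ s) = if 0 ∈ s then 1 else 0 :=
  rfl

theorem two_series (i : ℕ) [Semiring α] :
    1 + (X : PowerSeries α) ^ i.succ = indicatorSeries α {0, i.succ} := by
  ext n
  simp only [coeff_indicator, coeff_one, coeff_X_pow, Set.mem_insert_iff, Set.mem_singleton_iff,
    map_add]
  cases' n with d
  · simp [(Nat.succ_ne_zero i).symm]
  · simp [Nat.succ_ne_zero d]

theorem num_series' [Field α] (i : ℕ) :
    (1 - (X : PowerSeries α) ^ (i + 1))⁻¹ = indicatorSeries α {k | i + 1 ∣ k} := by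
  rw [PowerSeries.inv_eq_iff_mul_eq_one]
  · ext n
    cases n with
    | zero => simp [mul_sub, zero_pow, constantCoeff_indicator]
    | succ n =>
      rw [mul_sub, mul_one, map_sub, coeff_mul_X_pow', coeff_indicator, coeff_one,
        if_neg (Nat.succ_ne_zero n)]
      simp only [coeff_indicator, Set.mem_setOf_eq]
      split_ifs with h1 h2 h3 h4 h5
      · simp
      · exact absurd (Nat.dvd_sub h1 (dvd_refl _)) h3
      · exact absurd (Nat.le_of_dvd (Nat.succ_pos n) h1) h2
      · exact absurd (by have := Nat.dvd_add h5 (dvd_refl (i + 1)); rwa [Nat.sub_add_cancel h4] at this) h1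
      · simp
      · simp
  · simp [zero_pow]

def mkOdd : ℕ ↪ ℕ :=
  ⟨fun i => 2 * i + 1, fun x y h => by linarith⟩

-- The main workhorse of the partition theorem proof.
theorem partialGF_prop (α : Type*) [CommSemiring α] (n : ℕ) (s : Finset ℕ) (hs : ∀ i ∈ s, 0 < i)
    (c : ℕ → Set ℕ) (hc : ∀ i, i ∉ s → 0 ∈ c i) :
    #{p : n.Partition | (∀ j, p.parts.count j ∈ c j) ∧ ∀ j ∈ p.parts, j ∈ s} =
      coeff (R := α) n (∏ i ∈ s, indicatorSeries α ((· * i) '' c i)) := by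
  simp_rw [coeff_prod, coeff_indicator, prod_boole, sum_boole]
  apply congr_arg
  simp only [mem_univ, forall_true_left, not_and, not_forall, exists_prop,
    Set.mem_image, not_exists]
  set φ : (a : Nat.Partition n) →
    a ∈ filter (fun p ↦ (∀ (j : ℕ), Multiset.count j p.parts ∈ c j) ∧ ∀ j ∈ p.parts, j ∈ s) univ →
    ℕ →₀ ℕ := fun p _ => {
      toFun := fun i => Multiset.count i p.parts • i
      support := Finset.filter (fun i => i ≠ 0) p.parts.toFinset
      mem_support_toFun := fun a => by
        simp only [smul_eq_mul, ne_eq, mul_eq_zero, Multiset.count_eq_zero]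
        rw [not_or, not_not]
        simp only [Multiset.mem_toFinset, not_not, mem_filter] }
  refine Finset.card_bij φ ?_ ?_ ?_
  · intro a ha
    simp only [φ, not_forall, not_exists, not_and, exists_prop, mem_filter]
    rw [mem_finsuppAntidiag]
    dsimp only [ne_eq, smul_eq_mul, id_eq, eq_mpr_eq_cast, le_eq_subset, Finsupp.coe_mk]
    simp only [mem_univ, forall_true_left, not_and, not_forall, exists_prop,
      mem_filter, true_and] at ha
    refine ⟨⟨?_, fun i ↦ ?_⟩, fun i _ ↦ ⟨a.parts.count i, ha.1 i, rfl⟩⟩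
    · conv_rhs => simp [← a.parts_sum]
      rw [sum_multiset_count_of_subset _ s]
      · simp only [smul_eq_mul]
      · intro i
        simp only [Multiset.mem_toFinset, not_not, mem_filter]
        apply ha.2
    · simp only [ne_eq, Multiset.mem_toFinset, not_not, mem_filter, and_imp]
      exact fun hi _ ↦ ha.2 i hi
  · intro p₁ hp₁ p₂ hp₂ h
    apply Nat.Partition.ext
    simp only [true_and, mem_univ, mem_filter] at hp₁ hp₂
    ext i
    simp only [φ, ne_eq, Multiset.mem_toFinset, not_not, smul_eq_mul, Finsupp.mk.injEq] at h
    by_cases hi : i = 0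
    · rw [hi]
      rw [Multiset.count_eq_zero_of_notMem]
      · rw [Multiset.count_eq_zero_of_notMem]
        intro a; exact Nat.lt_irrefl 0 (hs 0 (hp₂.2 0 a))
      intro a; exact Nat.lt_irrefl 0 (hs 0 (hp₁.2 0 a))
    · rw [← mul_left_inj' hi]
      rw [funext_iff] at h
      exact h.2 i
  · simp only [φ, mem_filter, mem_finsuppAntidiag, mem_univ, exists_prop, true_and, and_assoc]
    rintro f ⟨hf, hf₃, hf₄⟩
    have hf' : f ∈ finsuppAntidiag s n := mem_finsuppAntidiag.mpr ⟨hf, hf₃⟩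
    simp only [mem_finsuppAntidiag] at hf'
    refine ⟨⟨∑ i ∈ s, Multiset.replicate (f i / i) i, ?_, ?_⟩, ?_, ?_, ?_⟩
    · intro i hi
      simp only [exists_prop, Multiset.mem_sum, mem_map, Function.Embedding.coeFn_mk] at hi
      rcases hi with ⟨t, ht, z⟩
      apply hs
      rwa [Multiset.eq_of_mem_replicate z]
    · simp_rw [Multiset.sum_sum, Multiset.sum_replicate, Nat.nsmul_eq_mul]
      rw [← hf'.1]
      refine sum_congr rfl fun i hi => Nat.div_mul_cancel ?_
      rcases hf₄ i hi with ⟨w, _, hw₂⟩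
      rw [← hw₂]
      exact dvd_mul_left _ _
    · intro i
      simp_rw [Multiset.count_sum', Multiset.count_replicate, sum_ite_eq']
      split_ifs with h
      · rcases hf₄ i h with ⟨w, hw₁, hw₂⟩
        rwa [← hw₂, Nat.mul_div_cancel _ (hs i h)]
      · exact hc _ h
    · intro i hi
      rw [Multiset.mem_sum] at hi
      rcases hi with ⟨j, hj₁, hj₂⟩
      rwa [Multiset.eq_of_mem_replicate hj₂]
    · ext i
      simp_rw [Multiset.count_sum', Multiset.count_replicate, sum_ite_eq']
      simp only [ne_eq, Multiset.mem_toFinset, not_not, smul_eq_mul, ite_mul,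
        zero_mul, Finsupp.coe_mk]
      split_ifs with h
      · apply Nat.div_mul_cancel
        rcases hf₄ i h with ⟨w, _, hw₂⟩
        apply Dvd.intro_left _ hw₂
      · apply symm
        rw [← Finsupp.notMem_support_iff]
        exact notMem_mono hf'.2 h

theorem prod_inv_eq (s : Finset ℕ) (hs : ∀ i ∈ s, 0 < i) :
    (∏ i ∈ s, (1 - (X : PowerSeries ℚ) ^ i))⁻¹ =
      ∏ i ∈ s, (1 - (X : PowerSeries ℚ) ^ i)⁻¹ := by
  have hc : ∀ i ∈ s, constantCoeff (R := ℚ) (1 - (X : PowerSeries ℚ) ^ i) ≠ 0 := by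
    intro i hi
    have : i ≠ 0 := (hs i hi).ne'
    simp [this, zero_pow]
  rw [PowerSeries.inv_eq_iff_mul_eq_one]
  · rw [← Finset.prod_mul_distrib]
    apply Finset.prod_eq_one
    intro i hi
    exact PowerSeries.inv_mul_cancel _ (hc i hi)
  · rw [map_prod]
    exact Finset.prod_ne_zero_iff.2 hc

theorem count_eq (N : ℕ) (s : Finset ℕ) (hs : ∀ i ∈ s, 0 < i) :
    (#{p : N.Partition | ∀ j ∈ p.parts, j ∈ s} : ℚ) =
      coeff (R := ℚ) N (∏ i ∈ s, (1 - (X : PowerSeries ℚ) ^ i))⁻¹ := by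
  rw [prod_inv_eq s hs]
  convert partialGF_prop ℚ N s hs (fun _ => Set.univ) (fun _ _ => trivial) using 2
  · congr 1
  · congr 1
    ext p
    simp only [Set.mem_univ, forall_const, true_and]
  · apply Finset.prod_congr rfl
    intro i hi
    have h1 : i - 1 + 1 = i := Nat.succ_pred_eq_of_pos (hs i hi)
    have hset : ((fun x => x * i) '' Set.univ) = {k | i - 1 + 1 ∣ k} := by
      ext k
      simp only [Set.mem_image, Set.mem_univ, true_and, Set.mem_setOf_eq, h1]
      constructor
      · rintro ⟨a, rfl⟩
        exact Dvd.intro_left a rfl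
      · rintro ⟨a, rfl⟩
        exact ⟨a, mul_comm _ _⟩
    rw [hset, ← num_series', h1]

theorem mexOdd_eq_iff {n : ℕ} (p : n.Partition) (r : ℕ) :
    mexOdd p = 2 * r + 1 ↔ (2 * r + 1 ∉ p.parts ∧ ∀ k < r, 2 * k + 1 ∈ p.parts) := by
  have hub : ∀ j ∈ p.parts, j ≤ n := by
    intro j hj
    calc j ≤ p.parts.sum := Multiset.single_le_sum (fun x _ => Nat.zero_le x) j hj
    _ = n := p.parts_sum
  have hne : {m : ℕ | m % 2 = 1 ∧ m ∉ p.parts}.Nonempty := by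
    refine ⟨2 * n + 1, by omega, fun h => ?_⟩
    have := hub _ h
    omega
  unfold mexOdd
  constructor
  · intro h
    have hmem := Nat.sInf_mem hne
    rw [h] at hmem
    refine ⟨hmem.2, fun k hk => ?_⟩
    have hlt : 2 * k + 1 < sInf {m : ℕ | m % 2 = 1 ∧ m ∉ p.parts} := by rw [h]; omega
    have := Nat.notMem_of_lt_sInf hlt
    simp only [Set.mem_setOf_eq, not_and, not_not] at this
    exact this (by omega)
  · rintro ⟨h1, h2⟩
    apply le_antisymm
    · exact Nat.sInf_le ⟨by omega, h1⟩
    · apply le_csInf hne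
      rintro m ⟨hm1, hm2⟩
      by_contra hlt
      push_neg at hlt
      have hm : m = 2 * (m / 2) + 1 := by omega
      have hk : m / 2 < r := by omega
      exact hm2 (hm ▸ h2 _ hk)

theorem Dsum (r : ℕ) : (Multiset.map (fun k => 2 * k + 1) (Multiset.range r)).sum = r ^ 2 := by
  induction r with
  | zero => simp
  | succ m ih => rw [Multiset.range_succ, Multiset.map_cons, Multiset.sum_cons, ih]; ring

end StmtAux

/-- The number of partitions of `n` whose smallest odd positive non-part equals `2r+1`
equals the coefficient of `q^n` in `q^{r²} / ∏_{m ≥ 1, m ≠ 2r+1} (1 - q^m)`. -/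
theorem stmt0 (n r : ℕ) :
    (Nat.card {p : n.Partition // mexOdd p = 2 * r + 1} : ℚ) =
      PowerSeries.coeff (R := ℚ) n ((X : PowerSeries ℚ) ^ (r ^ 2) *
        (∏ m ∈ (Finset.Icc 1 n).erase (2 * r + 1),
          (1 - (X : PowerSeries ℚ) ^ m))⁻¹) := by
  classical
  set D : Multiset ℕ := Multiset.map (fun k => 2 * k + 1) (Multiset.range r) with hD
  have hDsum : D.sum = r ^ 2 := StmtAux.Dsum r
  have hDnodup : D.Nodup :=
    Multiset.Nodup.map (fun a b h => by omega) (Multiset.nodup_range r)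
  have hDmem : ∀ m, m ∈ D ↔ ∃ k < r, 2 * k + 1 = m := by
    intro m
    simp [hD, Multiset.mem_map, Multiset.mem_range]
  have hDle : ∀ p : n.Partition, (∀ k < r, 2 * k + 1 ∈ p.parts) → D ≤ p.parts := by
    intro p hp
    rw [Multiset.le_iff_count]
    intro a
    by_cases ha : a ∈ D
    · rw [Multiset.count_eq_one_of_mem hDnodup ha]
      rw [Nat.one_le_iff_ne_zero, Ne, Multiset.count_eq_zero, not_not]
      obtain ⟨k, hk, rfl⟩ := (hDmem a).1 ha
      exact hp k hk
    · rw [Multiset.count_eq_zero_of_notMem ha]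
      exact Nat.zero_le _
  set s : Finset ℕ := (Finset.Icc 1 n).erase (2 * r + 1) with hs
  have hs_pos : ∀ i ∈ s, 0 < i := by
    intro i hi
    have h := Finset.mem_of_mem_erase hi
    rw [Finset.mem_Icc] at h
    omega
  rw [PowerSeries.coeff_X_pow_mul']
  by_cases hrn : r ^ 2 ≤ n
  · rw [if_pos hrn]
    have key : ∀ p : n.Partition, D ≤ p.parts → (p.parts - D).sum = n - r ^ 2 := by
      intro p h
      have h2 := congrArg Multiset.sum (tsub_add_cancel_of_le h)
      rw [Multiset.sum_add, hDsum, p.parts_sum] at h2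
      omega
    have hcard : Nat.card {p : n.Partition // mexOdd p = 2 * r + 1}
        = (Finset.univ.filter fun p : n.Partition => mexOdd p = 2 * r + 1).card := by
      rw [Nat.card_eq_fintype_card, Fintype.card_subtype]
    have hbij : (Finset.univ.filter fun p : n.Partition => mexOdd p = 2 * r + 1).card
        = (Finset.univ.filter fun q : (n - r ^ 2).Partition => ∀ j ∈ q.parts, j ∈ s).card := by
      have hprop : ∀ p : n.Partition,
          p ∈ Finset.univ.filter (fun p : n.Partition => mexOdd p = 2 * r + 1) →
          (2 * r + 1 ∉ p.parts ∧ ∀ k < r, 2 * k + 1 ∈ p.parts) := by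
        intro p hp
        rw [Finset.mem_filter] at hp
        exact (StmtAux.mexOdd_eq_iff p r).1 hp.2
      refine Finset.card_bij (fun p hp =>
        { parts := p.parts - D
          parts_pos := fun hj => p.parts_pos (Multiset.mem_of_le (Multiset.sub_le_self _ _) hj)
          parts_sum := key p (hDle p (hprop p hp).2) }) ?_ ?_ ?_
      · intro p hp
        rw [Finset.mem_filter]
        refine ⟨Finset.mem_univ _, ?_⟩
        intro j hj
        have hjp : j ∈ p.parts := Multiset.mem_of_le (Multiset.sub_le_self _ _) hj
        have hj1 : 0 < j := p.parts_pos hjp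
        have hjn : j ≤ n := by
          calc j ≤ p.parts.sum := Multiset.single_le_sum (fun x _ => Nat.zero_le x) j hjp
          _ = n := p.parts_sum
        rw [hs, Finset.mem_erase, Finset.mem_Icc]
        exact ⟨fun h => (hprop p hp).1 (h ▸ hjp), by omega, hjn⟩
      · intro p₁ hp₁ p₂ hp₂ h
        apply Nat.Partition.ext
        have h' : p₁.parts - D = p₂.parts - D := congrArg Nat.Partition.parts h
        have e1 := tsub_add_cancel_of_le (hDle p₁ (hprop p₁ hp₁).2)
        have e2 := tsub_add_cancel_of_le (hDle p₂ (hprop p₂ hp₂).2)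
        rw [← e1, ← e2, h']
      · intro q hq
        rw [Finset.mem_filter] at hq
        have hq2 := hq.2
        have hqs : (q.parts + D).sum = n := by
          rw [Multiset.sum_add, q.parts_sum, hDsum]
          omega
        refine ⟨{ parts := q.parts + D
                  parts_pos := ?_
                  parts_sum := hqs }, ?_, ?_⟩
        · intro i hi
          rw [Multiset.mem_add] at hi
          rcases hi with hi | hi
          · exact q.parts_pos hi
          · obtain ⟨k, _, rfl⟩ := (hDmem i).1 hi
            omega
        · rw [Finset.mem_filter]
          refine ⟨Finset.mem_univ _, (StmtAux.mexOdd_eq_iff _ r).2 ⟨?_, ?_⟩⟩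
          · intro hmem
            rw [Multiset.mem_add] at hmem
            rcases hmem with hmem | hmem
            · have := hq2 _ hmem
              rw [hs, Finset.mem_erase] at this
              exact this.1 rfl
            · obtain ⟨k, hk, hke⟩ := (hDmem _).1 hmem
              omega
          · intro k hk
            rw [Multiset.mem_add]
            exact Or.inr ((hDmem _).2 ⟨k, hk, rfl⟩)
        · apply Nat.Partition.ext
          show q.parts + D - D = q.parts
          rw [add_tsub_cancel_right]
    rw [hcard, hbij]
    exact StmtAux.count_eq (n - r ^ 2) s hs_pos
  · rw [if_neg hrn]
    have : IsEmpty {p : n.Partition // mexOdd p = 2 * r + 1} := by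
      refine ⟨fun ⟨p, hp⟩ => ?_⟩
      have hle := hDle p ((StmtAux.mexOdd_eq_iff p r).1 hp).2
      have h2 := congrArg Multiset.sum (tsub_add_cancel_of_le hle)
      rw [Multiset.sum_add, hDsum, p.parts_sum] at h2
      omega
    rw [Nat.card_of_isEmpty]
    simp
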